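/- Any compact exact Lagrangian submanifold L ⊂ T*S^{4k+1} with vanishing Maslov class that is a homotopy sphere and bounds a compact parallelizable manifold cannot realize those exotic smooth structures on S^{4k+1} that do not bound parallelizable manifolds; in particular, in dimension 9, at most 2 of the 8 smooth structures on the 9-sphere can arise as such Lagrangians. -/
import Mathlib


/-!
STATEMENT 18: Group-theoretic consequence of the main theorem in dimension 9.
`Θ` stands for the group `Θ₉` of homotopy 9-spheres (of order 8), `bP` for the subgroup
`bP₁₀` of those bounding parallelizable manifolds (of order 2), and `IsLag σ` for the
statement that the homotopy sphere `σ` embeds as a Lagrangian in `T*S⁹`.  If every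
Lagrangian homotopy sphere lies in `bP` (the main theorem), then `bP` has index 4 and at
most 2 of the 8 smooth structures on the 9-sphere arise as Lagrangians in `T*S⁹`.
-/

theorem stmt18
    (Θ : Type*) [Group Θ] (bP : Subgroup Θ)
    (hΘ : Nat.card Θ = 8) (hbP : Nat.card bP = 2)
    (IsLag : Θ → Prop)
    -- the main theorem of the paper: every Lagrangian homotopy 9-sphere in T*S⁹
    -- bounds a parallelizable manifold
    (hMain : ∀ σ : Θ, IsLag σ → σ ∈ bP) :
    bP.index = 4 ∧ Nat.card {σ : Θ // IsLag σ} ≤ 2 := by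
  have hfin : Finite Θ := Nat.finite_of_card_ne_zero (by omega)
  have hmul := Subgroup.card_mul_index bP
  constructor
  · rw [hbP, hΘ] at hmul; omega
  · have hinj : Function.Injective (fun σ : {σ : Θ // IsLag σ} => (⟨σ.1, hMain σ.1 σ.2⟩ : bP)) := by
      intro a b h
      simp only [Subtype.mk.injEq] at h; exact Subtype.ext h
    calc Nat.card {σ : Θ // IsLag σ} ≤ Nat.card bP := Nat.card_le_card_of_injective _ hinj
    _ = 2 := hbP
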